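/- arXiv:1412.0275 — 3 statements merged into one kernel-verified Lean document; each statement's English description precedes it below -/
import Mathlib

section
/- For every s ∈ (0,1] and all real numbers a, b with a ≥ b ≥ 0, one has (a+b)^{2s} + (a−b)^{2s} ≤ 2·a^{2s} + 2·b^{2s}. -/
private lemma rpow_subadd {x y p : ℝ} (hx : 0 ≤ x) (hy : 0 ≤ y) (hp : 0 ≤ p) (hp1 : p ≤ 1) :
    (x + y) ^ p ≤ x ^ p + y ^ p := by
  have h := NNReal.rpow_add_le_add_rpow ⟨x, hx⟩ ⟨y, hy⟩ hp hp1
  have := NNReal.coe_le_coe.2 h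
  push_cast at this
  exact Real.rpow_add_le_add_rpow hx hy hp hp1

private lemma rpow_concave2 {x y s : ℝ} (hx : 0 ≤ x) (hy : 0 ≤ y) (hs : 0 ≤ s) (hs1 : s ≤ 1) :
    x ^ s + y ^ s ≤ 2 * ((x + y) / 2) ^ s := by
  have h := (Real.concaveOn_rpow hs hs1).2 (Set.mem_Ici.2 hx) (Set.mem_Ici.2 hy)
    (by norm_num : (0:ℝ) ≤ 1/2) (by norm_num : (0:ℝ) ≤ 1/2) (by norm_num)
  simp only [smul_eq_mul] at h
  have : (1/2 : ℝ) * x + (1/2) * y = (x + y) / 2 := by ring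
  rw [this] at h
  linarith

/-- For every `s ∈ (0,1]` and all reals `a ≥ b ≥ 0`, one has
`(a+b)^(2s) + (a-b)^(2s) ≤ 2 a^(2s) + 2 b^(2s)` (real powers). -/
theorem stmt_0 (s : ℝ) (hs : s ∈ Set.Ioc (0 : ℝ) 1) (a b : ℝ)
    (hb : 0 ≤ b) (hab : b ≤ a) :
    (a + b) ^ (2 * s) + (a - b) ^ (2 * s) ≤ 2 * a ^ (2 * s) + 2 * b ^ (2 * s) := by
  obtain ⟨hs0, hs1⟩ := hs
  have ha : 0 ≤ a := hb.trans hab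
  have hab' : 0 ≤ a + b := by linarith
  have hab'' : 0 ≤ a - b := by linarith
  have e : ∀ x : ℝ, 0 ≤ x → x ^ (2 * s) = (x ^ 2) ^ s := by
    intro x hx
    rw [show (2 : ℝ) * s = ((2 : ℕ) : ℝ) * s by norm_num, Real.rpow_natCast_mul hx]
  rw [e _ hab', e _ hab'', e _ ha, e _ hb]
  have h1 : ((a + b) ^ 2) ^ s + ((a - b) ^ 2) ^ s
      ≤ 2 * (((a + b) ^ 2 + (a - b) ^ 2) / 2) ^ s :=
    rpow_concave2 (by positivity) (by positivity) hs0.le hs1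
  have h2 : ((a + b) ^ 2 + (a - b) ^ 2) / 2 = a ^ 2 + b ^ 2 := by ring
  rw [h2] at h1
  have h3 : (a ^ 2 + b ^ 2) ^ s ≤ (a ^ 2) ^ s + (b ^ 2) ^ s :=
    rpow_subadd (by positivity) (by positivity) hs0.le hs1
  linarith
end

section
/- There exists a constant c₂ > 0, depending only on n, s and C, such that for every x ∈ ℝⁿ with x ≠ 0 one has V(x) ≤ c₂·|x|^{2s−n}; in particular V(x) < ∞ for x ≠ 0. -/
open MeasureTheory
open scoped ENNReal

/-- Let `n > 2s > 0`, `C > 0`, and let `p : ℝⁿ × (0,∞) → [0,∞]` be measurable with the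
stable scaling property and the bound `p(x,1) ≤ C/(1+|x|^{n+2s})`.  Then there is
`c₂ > 0`, depending only on `n`, `s` and `C`, such that the potential
`V(x) = ∫₀^∞ p(x,t) dt` satisfies `V(x) ≤ c₂ |x|^{2s-n}` (in particular `V(x) < ∞`)
for every `x ≠ 0`. -/
theorem stmt_8 (n : ℕ) (hn : 1 ≤ n) (s : ℝ) (hs : 0 < s) (hns : 2 * s < n)
    (C : ℝ) (hC : 0 < C)
    (p : EuclideanSpace ℝ (Fin n) → ℝ → ℝ≥0∞)
    (hp : Measurable (Function.uncurry p))
    (hscal : ∀ x : EuclideanSpace ℝ (Fin n), ∀ t : ℝ, 0 < t →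
      p x t = ENNReal.ofReal (t ^ (-((n : ℝ) / (2 * s)))) * p ((t ^ (-(1 / (2 * s)))) • x) 1)
    (hbound : ∀ x : EuclideanSpace ℝ (Fin n),
      p x 1 ≤ ENNReal.ofReal (C / (1 + ‖x‖ ^ ((n : ℝ) + 2 * s))))
    (V : EuclideanSpace ℝ (Fin n) → ℝ≥0∞)
    (hV : ∀ x, V x = ∫⁻ t in Set.Ioi (0 : ℝ), p x t) :
    ∃ c₂ : ℝ, 0 < c₂ ∧ ∀ x : EuclideanSpace ℝ (Fin n), x ≠ 0 →
      V x ≤ ENNReal.ofReal (c₂ * ‖x‖ ^ (2 * s - n)) ∧ V x < ⊤ := by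
  have h2s : (0:ℝ) < 2 * s := by linarith
  have hn2s : (0:ℝ) < (n:ℝ) - 2 * s := by linarith
  set e : ℝ := -((n:ℝ) / (2 * s)) with he
  have helt : e < -1 := by
    rw [he, neg_lt, neg_neg, lt_div_iff₀ h2s]
    linarith
  refine ⟨C / 2 + C * (2 * s) / ((n:ℝ) - 2 * s), by positivity, ?_⟩
  intro x hx
  have ha : 0 < ‖x‖ := norm_pos_iff.mpr hx
  set a : ℝ := ‖x‖ with haa
  set A : ℝ := a ^ (2 * s) with hAdef
  have hApos : 0 < A := Real.rpow_pos_of_pos ha _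
  have hapow : 0 < a ^ ((n:ℝ) + 2 * s) := Real.rpow_pos_of_pos ha _
  -- the pointwise bound
  have hpt : ∀ t ∈ Set.Ioi (0:ℝ),
      p x t ≤ ENNReal.ofReal (C * min (t / a ^ ((n:ℝ) + 2 * s)) (t ^ e)) := by
    intro t ht
    rw [Set.mem_Ioi] at ht
    have hte : 0 ≤ t ^ e := Real.rpow_nonneg ht.le _
    set y := (t ^ (-(1 / (2 * s)))) • x with hy
    have hny : ‖y‖ = t ^ (-(1 / (2 * s))) * a := by
      rw [hy, norm_smul, Real.norm_eq_abs, abs_of_pos (Real.rpow_pos_of_pos ht _)]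
    have hb : ‖y‖ ^ ((n:ℝ) + 2 * s)
        = t ^ (-(((n:ℝ) + 2 * s) / (2 * s))) * a ^ ((n:ℝ) + 2 * s) := by
      rw [hny, Real.mul_rpow (Real.rpow_pos_of_pos ht _).le ha.le,
        ← Real.rpow_mul ht.le]
      congr 1
      field_simp
    set b : ℝ := ‖y‖ ^ ((n:ℝ) + 2 * s) with hbdef
    have hbpos : 0 < b := by
      rw [hb]; positivity
    calc p x t = ENNReal.ofReal (t ^ e) * p y 1 := hscal x t ht
      _ ≤ ENNReal.ofReal (t ^ e) * ENNReal.ofReal (C / (1 + b)) := by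
          exact mul_le_mul_of_nonneg_left (hbound y) zero_le
      _ = ENNReal.ofReal (t ^ e * (C / (1 + b))) := (ENNReal.ofReal_mul hte).symm
      _ ≤ ENNReal.ofReal (C * min (t / a ^ ((n:ℝ) + 2 * s)) (t ^ e)) := by
          apply ENNReal.ofReal_le_ofReal
          rw [mul_min_of_nonneg _ _ hC.le]
          apply le_min
          · have h1 : C / (1 + b) ≤ C / b :=
              div_le_div_of_nonneg_left hC.le hbpos (by linarith)
            have h2 : t ^ e * (C / b) = C * (t / a ^ ((n:ℝ) + 2 * s)) := by
              have htc : (0:ℝ) < t ^ (-(((n:ℝ) + 2 * s) / (2 * s))) :=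
                Real.rpow_pos_of_pos ht _
              have hts : t ^ e = t * t ^ (-(((n:ℝ) + 2 * s) / (2 * s))) := by
                rw [show e = 1 + (-(((n:ℝ) + 2 * s) / (2 * s))) by
                  rw [he]; field_simp; ring, Real.rpow_add ht, Real.rpow_one]
              rw [hb, hts]
              field_simp
            calc t ^ e * (C / (1 + b)) ≤ t ^ e * (C / b) := by
                  exact mul_le_mul_of_nonneg_left h1 hte
              _ = C * (t / a ^ ((n:ℝ) + 2 * s)) := h2
          · have h1 : C / (1 + b) ≤ C := by
              apply div_le_self hC.le; linarith
            calc t ^ e * (C / (1 + b)) ≤ t ^ e * C :=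
                  mul_le_mul_of_nonneg_left h1 hte
              _ = C * t ^ e := mul_comm _ _
  -- measurability of the bound
  have hmeas : Measurable fun t : ℝ =>
      ENNReal.ofReal (C * min (t / a ^ ((n:ℝ) + 2 * s)) (t ^ e)) := by
    apply Measurable.ennreal_ofReal
    apply Measurable.const_mul
    exact Measurable.min ((measurable_id (α := ℝ)).div_const _)
      ((measurable_id (α := ℝ)).pow_const e)
  -- the main bound
  have key : V x ≤ ENNReal.ofReal
      ((C / 2 + C * (2 * s) / ((n:ℝ) - 2 * s)) * a ^ (2 * s - n)) := by
    rw [hV]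
    have step1 : (∫⁻ t in Set.Ioi (0:ℝ), p x t)
        ≤ ∫⁻ t in Set.Ioi (0:ℝ),
            ENNReal.ofReal (C * min (t / a ^ ((n:ℝ) + 2 * s)) (t ^ e)) :=
      setLIntegral_mono hmeas hpt
    have split : (∫⁻ t in Set.Ioi (0:ℝ),
          ENNReal.ofReal (C * min (t / a ^ ((n:ℝ) + 2 * s)) (t ^ e)))
        = (∫⁻ t in Set.Ioc (0:ℝ) A,
            ENNReal.ofReal (C * min (t / a ^ ((n:ℝ) + 2 * s)) (t ^ e)))
          + ∫⁻ t in Set.Ioi A,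
            ENNReal.ofReal (C * min (t / a ^ ((n:ℝ) + 2 * s)) (t ^ e)) := by
      rw [← lintegral_union measurableSet_Ioi (Set.Ioc_disjoint_Ioi le_rfl),
        Set.Ioc_union_Ioi_eq_Ioi hApos.le]
    -- first piece
    have piece1 : (∫⁻ t in Set.Ioc (0:ℝ) A,
          ENNReal.ofReal (C * min (t / a ^ ((n:ℝ) + 2 * s)) (t ^ e)))
        ≤ ENNReal.ofReal ((C / 2) * a ^ (2 * s - n)) := by
      have mono1 : (∫⁻ t in Set.Ioc (0:ℝ) A,
            ENNReal.ofReal (C * min (t / a ^ ((n:ℝ) + 2 * s)) (t ^ e)))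
          ≤ ∫⁻ t in Set.Ioc (0:ℝ) A,
              ENNReal.ofReal ((C / a ^ ((n:ℝ) + 2 * s)) * t) := by
        apply setLIntegral_mono
        · exact (measurable_id.const_mul _).ennreal_ofReal
        · intro t ht
          apply ENNReal.ofReal_le_ofReal
          calc C * min (t / a ^ ((n:ℝ) + 2 * s)) (t ^ e)
              ≤ C * (t / a ^ ((n:ℝ) + 2 * s)) :=
                mul_le_mul_of_nonneg_left (min_le_left _ _) hC.le
            _ = (C / a ^ ((n:ℝ) + 2 * s)) * t := by ring
      have eq1 : (∫⁻ t in Set.Ioc (0:ℝ) A,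
            ENNReal.ofReal ((C / a ^ ((n:ℝ) + 2 * s)) * t))
          = ENNReal.ofReal ((C / a ^ ((n:ℝ) + 2 * s)) * (A ^ 2 / 2)) := by
        rw [← ofReal_integral_eq_lintegral_ofReal]
        · congr 1
          rw [MeasureTheory.integral_const_mul]
          congr 1
          rw [← intervalIntegral.integral_of_le hApos.le, integral_id]
          ring
        · exact (continuous_const.mul continuous_id).integrableOn_Ioc
        · filter_upwards [ae_restrict_mem measurableSet_Ioc] with t ht
          have := ht.1
          positivity
      have eq2 : (C / a ^ ((n:ℝ) + 2 * s)) * (A ^ 2 / 2) = (C / 2) * a ^ (2 * s - n) := by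
        have hq : a ^ (4 * s) / a ^ ((n:ℝ) + 2 * s) = a ^ (2 * s - (n:ℝ)) := by
          rw [← Real.rpow_sub ha]; congr 1; ring
        have hA2 : A ^ 2 = a ^ (4 * s) := by
          rw [hAdef, ← Real.rpow_natCast (a ^ (2 * s)) 2, ← Real.rpow_mul ha.le]
          congr 1
          norm_num
          ring
        rw [hA2]
        calc C / a ^ ((n:ℝ) + 2 * s) * (a ^ (4 * s) / 2)
            = C / 2 * (a ^ (4 * s) / a ^ ((n:ℝ) + 2 * s)) := by ring
          _ = C / 2 * a ^ (2 * s - (n:ℝ)) := by rw [hq]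
      calc _ ≤ _ := mono1
        _ = _ := eq1
        _ = _ := by rw [eq2]
    -- second piece
    have piece2 : (∫⁻ t in Set.Ioi A,
          ENNReal.ofReal (C * min (t / a ^ ((n:ℝ) + 2 * s)) (t ^ e)))
        ≤ ENNReal.ofReal ((C * (2 * s) / ((n:ℝ) - 2 * s)) * a ^ (2 * s - n)) := by
      have mono2 : (∫⁻ t in Set.Ioi A,
            ENNReal.ofReal (C * min (t / a ^ ((n:ℝ) + 2 * s)) (t ^ e)))
          ≤ ∫⁻ t in Set.Ioi A, ENNReal.ofReal (C * t ^ e) := by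
        apply setLIntegral_mono
        · exact (((measurable_id (α := ℝ)).pow_const e).const_mul C).ennreal_ofReal
        · intro t ht
          exact ENNReal.ofReal_le_ofReal
            (mul_le_mul_of_nonneg_left (min_le_right _ _) hC.le)
      have eq1 : (∫⁻ t in Set.Ioi A, ENNReal.ofReal (C * t ^ e))
          = ENNReal.ofReal (C * (-A ^ (e + 1) / (e + 1))) := by
        rw [← ofReal_integral_eq_lintegral_ofReal]
        · rw [MeasureTheory.integral_const_mul, integral_Ioi_rpow_of_lt helt hApos]
        · exact (integrableOn_Ioi_rpow_of_lt helt hApos).const_mul _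
        · filter_upwards [ae_restrict_mem measurableSet_Ioi] with t ht
          have h0t : (0:ℝ) < t := hApos.trans ht
          positivity
      have eq2 : C * (-A ^ (e + 1) / (e + 1))
          = (C * (2 * s) / ((n:ℝ) - 2 * s)) * a ^ (2 * s - n) := by
        have hAe : A ^ (e + 1) = a ^ (2 * s - n) := by
          rw [hAdef, ← Real.rpow_mul ha.le]
          congr 1
          rw [he]
          field_simp
          ring
        have hd1 : ((n:ℝ) - 2 * s) ≠ 0 := ne_of_gt hn2s
        have hd2 : (2 * s) ≠ 0 := ne_of_gt h2s
        rw [hAe, he]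
        have hne : -((n:ℝ) / (2 * s)) + 1 = -(((n:ℝ) - 2 * s) / (2 * s)) := by
          field_simp
          linarith
        rw [hne, div_neg, neg_div, neg_neg, div_div_eq_mul_div]
        field_simp
      calc _ ≤ _ := mono2
        _ = _ := eq1
        _ = _ := by rw [eq2]
    calc (∫⁻ t in Set.Ioi (0:ℝ), p x t)
        ≤ _ := step1
      _ = _ := split
      _ ≤ ENNReal.ofReal ((C / 2) * a ^ (2 * s - n))
          + ENNReal.ofReal ((C * (2 * s) / ((n:ℝ) - 2 * s)) * a ^ (2 * s - n)) :=
            add_le_add piece1 piece2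
      _ = ENNReal.ofReal
            ((C / 2 + C * (2 * s) / ((n:ℝ) - 2 * s)) * a ^ (2 * s - n)) := by
          rw [← ENNReal.ofReal_add (by positivity) (by positivity)]
          congr 1
          ring
  exact ⟨key, lt_of_le_of_lt key ENNReal.ofReal_lt_top⟩
end

section
/- Let Ω ⊂ ℝⁿ be a bounded measurable set and let g ∈ L^{n/(2s)}(Ω), extended by zero to ℝⁿ. Then for every q ∈ [1,∞) there exists a constant C, depending only on n, s, q, Ω and c₂, such that the function u(x) = ∫_Ω g(y)·V(x−y) dy satisfies ‖u‖_{L^q(Ω)} ≤ C·‖g‖_{L^{n/(2s)}(Ω)}. -/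
open MeasureTheory
open scoped ENNReal

private lemma real_term_eq (R a : ℝ) (hR : 0 < R) (n : ℕ) : ∀ k : ℕ,
    (R / 2 ^ (k + 1)) ^ (-a) * (R / 2 ^ k) ^ n
      = (R ^ ((n : ℝ) - a) * 2 ^ a) * ((2 : ℝ) ^ (a - (n : ℝ))) ^ k := by
  have h20 : (0:ℝ) ≤ 2 := by norm_num
  have key : ∀ u : ℝ, 0 < u → (u / 2) ^ (-a) = u ^ (-a) * 2 ^ a := by
    intro u hu
    rw [Real.div_rpow hu.le h20, Real.rpow_neg h20, div_eq_mul_inv, inv_inv]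
  intro k
  induction k with
  | zero =>
      have h1 : (R / 2 ^ (0 + 1)) = R / 2 := by norm_num
      have h2 : (R ^ ((n : ℝ) - a)) = R ^ (n : ℝ) * R ^ (-a) := by
        rw [← Real.rpow_add hR]; ring_nf
      rw [h1, key R hR, h2, Real.rpow_natCast]
      ring
  | succ k ih =>
      have e1 : R / 2 ^ (k + 1 + 1) = (R / 2 ^ (k + 1)) / 2 := by
        rw [pow_succ]; ring
      have e2 : R / 2 ^ (k + 1) = (R / 2 ^ k) / 2 := by
        rw [pow_succ]; ring
      have hpos : (0:ℝ) < R / 2 ^ (k+1) := by positivity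
      have e3 : ((2:ℝ) ^ (a - (n:ℝ))) = 2 ^ a / 2 ^ (n:ℕ) := by
        rw [Real.rpow_sub (by norm_num : (0:ℝ) < 2), Real.rpow_natCast]
      calc (R / 2 ^ (k + 1 + 1)) ^ (-a) * (R / 2 ^ (k + 1)) ^ n
          = ((R / 2 ^ (k + 1)) / 2) ^ (-a) * (((R / 2 ^ k) / 2)) ^ n := by rw [← e1, ← e2]
        _ = ((R / 2 ^ (k + 1)) ^ (-a) * 2 ^ a) * ((R / 2 ^ k) ^ n / 2 ^ n) := by
            rw [key _ hpos, div_pow]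
        _ = ((R / 2 ^ (k + 1)) ^ (-a) * (R / 2 ^ k) ^ n) * (2 ^ a / 2 ^ (n:ℕ)) := by ring
        _ = (R ^ ((n : ℝ) - a) * 2 ^ a) * ((2 : ℝ) ^ (a - (n : ℝ))) ^ (k+1) := by
            rw [ih, ← e3, pow_succ]; ring

private lemma kernel_finite (n : ℕ) (hn : 1 ≤ n) {a R : ℝ} (ha0 : 0 ≤ a) (han : a < n) (hR : 0 < R) :
    ∫⁻ z in Metric.closedBall (0 : EuclideanSpace ℝ (Fin n)) R,
      ENNReal.ofReal (‖z‖ ^ (-a)) < ∞ := by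
  set E := EuclideanSpace ℝ (Fin n)
  set B : ℕ → Set E := fun k => Metric.closedBall (0 : E) (R / 2 ^ k) with hB
  set A : ℕ → Set E := fun k => B k \ B (k + 1) with hA
  have hNA : ∀ k, ¬ (R / 2 ^ (k+1)) < 0 := by
    intro k h; exact absurd h (not_lt.2 (by positivity))
  -- cover
  have hcover : Metric.closedBall (0 : E) R \ {0} ⊆ ⋃ k, A k := by
    rintro z ⟨hz1, hz2⟩
    have hz0 : 0 < ‖z‖ := norm_pos_iff.2 (by simpa using hz2)
    have hzR : ‖z‖ ≤ R := by simpa [mem_closedBall_zero_iff] using hz1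
    set t := R / ‖z‖ with ht
    have ht1 : 1 ≤ t := (one_le_div hz0).2 hzR
    have ht0 : 0 < t := lt_of_lt_of_le one_pos ht1
    set k := ⌊Real.logb 2 t⌋₊ with hk
    have hlog0 : 0 ≤ Real.logb 2 t := Real.logb_nonneg one_lt_two ht1
    have hlogb : (2:ℝ) ^ Real.logb 2 t = t := Real.rpow_logb two_pos (by norm_num) ht0
    have h1 : (2:ℝ) ^ (k:ℕ) ≤ t := by
      rw [← Real.rpow_natCast 2 k, ← hlogb]
      exact (Real.rpow_le_rpow_left_iff one_lt_two).2 (Nat.floor_le hlog0)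
    have h2 : t < (2:ℝ) ^ (k+1 : ℕ) := by
      rw [← Real.rpow_natCast 2 (k+1), ← hlogb]
      refine (Real.rpow_lt_rpow_left_iff one_lt_two).2 ?_
      push_cast
      exact Nat.lt_floor_add_one _
    refine Set.mem_iUnion.2 ⟨k, ?_, ?_⟩
    · rw [hB, mem_closedBall_zero_iff ,
        le_div_iff₀ (by positivity : (0:ℝ) < 2 ^ k)]
      have h1' := (le_div_iff₀ hz0).1 h1
      nlinarith [h1']
    · rw [hB]
      simp only [mem_closedBall_zero_iff, not_le]
      rw [div_lt_iff₀ (by positivity : (0:ℝ) < 2 ^ (k+1))]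
      have h2' := (div_lt_iff₀ hz0).1 h2
      nlinarith [h2']
  haveI : Nonempty (Fin n) := ⟨⟨0, hn⟩⟩
  have h0 : volume ({(0 : E)} : Set E) = 0 := measure_singleton _
  have hmeasf : Measurable fun z : E => ENNReal.ofReal (‖z‖ ^ (-a)) :=
    ENNReal.measurable_ofReal.comp (measurable_norm.pow measurable_const)
  set vB := volume (Metric.ball (0 : E) 1) with hvB_def
  have hvB : vB < ∞ := measure_ball_lt_top
  have hvol : ∀ k, volume (B k) = ENNReal.ofReal ((R / 2 ^ k) ^ n) * vB := by
    intro k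
    have h := Measure.addHaar_closedBall (μ := volume) (0 : E) (r := R / 2 ^ k) (by positivity)
    have hfr : Module.finrank ℝ E = n := finrank_euclideanSpace_fin
    rw [hfr] at h
    simpa [hB] using h
  set x : ℝ≥0∞ := ENNReal.ofReal ((2 : ℝ) ^ (a - (n : ℝ))) with hx_def
  have hx1 : x < 1 := by
    rw [hx_def, ← ENNReal.ofReal_one]
    refine ENNReal.ofReal_lt_ofReal_iff_of_nonneg (by positivity) |>.2 ?_
    exact Real.rpow_lt_one_of_one_lt_of_neg one_lt_two (by linarith)
  set c : ℝ := R ^ ((n : ℝ) - a) * (2 : ℝ) ^ a with hc_def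
  have hbound : ∀ k, ∫⁻ z in A k, ENNReal.ofReal (‖z‖ ^ (-a)) ∂volume
      ≤ (ENNReal.ofReal c * x ^ k) * vB := by
    intro k
    have hAm : MeasurableSet (A k) :=
      measurableSet_closedBall.diff measurableSet_closedBall
    have hpos : (0:ℝ) < R / 2 ^ (k + 1) := by positivity
    calc ∫⁻ z in A k, ENNReal.ofReal (‖z‖ ^ (-a)) ∂volume
        ≤ ∫⁻ _ in A k, ENNReal.ofReal ((R / 2 ^ (k+1)) ^ (-a)) ∂volume := by
          refine setLIntegral_mono' hAm ?_
          intro z hz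
          have hzlt : R / 2 ^ (k+1) < ‖z‖ := by
            have h2 := hz.2
            rw [hB] at h2
            simp only [mem_closedBall_zero_iff, not_le] at h2
            exact h2
          exact ENNReal.ofReal_le_ofReal
            (Real.rpow_le_rpow_of_nonpos hpos hzlt.le (neg_nonpos.2 ha0))
      _ = ENNReal.ofReal ((R / 2 ^ (k+1)) ^ (-a)) * volume (A k) := setLIntegral_const _ _
      _ ≤ ENNReal.ofReal ((R / 2 ^ (k+1)) ^ (-a)) * volume (B k) := by
          exact mul_le_mul_right (measure_mono Set.diff_subset) _
      _ = (ENNReal.ofReal c * x ^ k) * vB := by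
          rw [hvol k, ← mul_assoc, ← ENNReal.ofReal_pow (by positivity), ← ENNReal.ofReal_mul
            (by positivity), real_term_eq R a hR n k, ENNReal.ofReal_mul (by positivity),
            ENNReal.ofReal_pow (by positivity)]
  calc ∫⁻ z in Metric.closedBall (0 : E) R, ENNReal.ofReal (‖z‖ ^ (-a)) ∂volume
      ≤ ∫⁻ z in (Metric.closedBall (0 : E) R \ {0}) ∪ {0},
          ENNReal.ofReal (‖z‖ ^ (-a)) ∂volume := by
        refine lintegral_mono_set ?_
        intro z hz
        by_cases h : z = 0
        · exact Set.mem_union_right _ (by simp [h])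
        · exact Set.mem_union_left _ ⟨hz, by simp [h]⟩
    _ ≤ (∫⁻ z in Metric.closedBall (0 : E) R \ {0}, ENNReal.ofReal (‖z‖ ^ (-a)) ∂volume)
        + ∫⁻ z in ({0} : Set E), ENNReal.ofReal (‖z‖ ^ (-a)) ∂volume :=
        lintegral_union_le _ _ _
    _ ≤ (∫⁻ z in ⋃ k, A k, ENNReal.ofReal (‖z‖ ^ (-a)) ∂volume) + 0 := by
        gcongr
        · exact le_of_eq (setLIntegral_measure_zero _ _ h0)
    _ ≤ (∑' k, ∫⁻ z in A k, ENNReal.ofReal (‖z‖ ^ (-a)) ∂volume) + 0 := by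
        gcongr
        exact lintegral_iUnion_le _ _
    _ ≤ (∑' k, (ENNReal.ofReal c * x ^ k) * vB) + 0 := by
        gcongr with k
        exact hbound k
    _ = (ENNReal.ofReal c * vB) * ∑' k, x ^ k := by
        rw [add_zero, ENNReal.tsum_mul_right, ENNReal.tsum_mul_left]; ring
    _ < ∞ := by
        refine ENNReal.mul_lt_top (ENNReal.mul_lt_top ENNReal.ofReal_lt_top hvB) ?_
        rw [ENNReal.tsum_geometric]
        exact ENNReal.inv_lt_top.2 (tsub_pos_of_lt hx1)

/-- Let `n > 2s`, `s ∈ (0,1)`, and let `V : ℝⁿ → ℝ` be measurable with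
`0 ≤ V(z) ≤ c₂ |z|^{2s-n}` for `z ≠ 0`.  Let `Ω ⊆ ℝⁿ` be bounded and measurable and
`g ∈ L^{n/(2s)}(Ω)` extended by zero.  Then for every `q ∈ [1,∞)` there is `C`,
depending only on `n`, `s`, `q`, `Ω`, `c₂`, such that `u(x) = ∫_Ω g(y) V(x-y) dy`
satisfies `‖u‖_{L^q(Ω)} ≤ C ‖g‖_{L^{n/(2s)}(Ω)}`. -/
theorem stmt_11 (n : ℕ) (hn : 1 ≤ n) (s : ℝ) (hs : s ∈ Set.Ioo (0 : ℝ) 1)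
    (hns : 2 * s < n) (c₂ : ℝ) (hc₂ : 0 < c₂)
    (V : EuclideanSpace ℝ (Fin n) → ℝ) (hVmeas : Measurable V)
    (hV0 : ∀ z, 0 ≤ V z)
    (hVbound : ∀ z : EuclideanSpace ℝ (Fin n), z ≠ 0 → V z ≤ c₂ * ‖z‖ ^ (2 * s - n))
    (Ω : Set (EuclideanSpace ℝ (Fin n))) (hΩb : Bornology.IsBounded Ω)
    (hΩm : MeasurableSet Ω) :
    ∀ q : ℝ, 1 ≤ q →
      ∃ C : ℝ, 0 < C ∧ ∀ g : EuclideanSpace ℝ (Fin n) → ℝ,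
        (∀ x ∉ Ω, g x = 0) →
        MemLp g (ENNReal.ofReal ((n : ℝ) / (2 * s))) (volume.restrict Ω) →
        eLpNorm (fun x => ∫ y in Ω, g y * V (x - y)) (ENNReal.ofReal q) (volume.restrict Ω)
          ≤ ENNReal.ofReal C
            * eLpNorm g (ENNReal.ofReal ((n : ℝ) / (2 * s))) (volume.restrict Ω) := by
  intro q hq
  set μ : Measure (EuclideanSpace ℝ (Fin n)) := volume.restrict Ω with hμ
  have hs0 : 0 < s := hs.1
  have h2s : (0:ℝ) < 2 * s := by linarith
  have hn0 : (0:ℝ) < n := lt_trans h2s hns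
  set p : ℝ := (n : ℝ) / (2 * s) with hp_def
  have hp1 : 1 < p := (one_lt_div h2s).2 hns
  have hp0 : 0 < p := lt_trans one_pos hp1
  have hip : 1 / p = 2 * s / n := by rw [hp_def, one_div_div]
  set Q : ℝ := max q (p + 1) with hQ_def
  have hqQ : q ≤ Q := le_max_left _ _
  have hpQ : p + 1 ≤ Q := le_max_right _ _
  have hpQ' : p < Q := by linarith
  have hQ1 : 1 ≤ Q := le_trans hq hqQ
  have hQ0 : 0 < Q := lt_of_lt_of_le one_pos hQ1
  set d : ℝ := 1 - 1 / p + 1 / Q with hd_def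
  have hp_inv1 : 1 / p < 1 := by
    rw [div_lt_one hp0]; exact hp1
  have hd0 : 0 < d := by
    have : 0 < 1 / Q := by positivity
    simp only [hd_def]; linarith
  set r : ℝ := d⁻¹ with hr_def
  have hr0 : 0 < r := by positivity
  have hrd : r * d = 1 := inv_mul_cancel₀ hd0.ne'
  -- exponents for Hölder
  set t1 : ℝ := 1 / Q with ht1_def
  set t2 : ℝ := d - 1 / Q with ht2_def
  set t3 : ℝ := 1 / p - 1 / Q with ht3_def
  have ht1_0 : 0 ≤ t1 := by positivity
  have ht2_0 : 0 ≤ t2 := by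
    simp only [ht2_def, hd_def]; linarith
  have ht3_0 : 0 ≤ t3 := by
    have : 1 / Q < 1 / p := by
      apply one_div_lt_one_div_of_lt hp0 hpQ'
    simp only [ht3_def]; linarith
  have htsum : t1 + t2 + t3 = 1 := by
    simp only [ht1_def, ht2_def, ht3_def, hd_def]; ring
  -- the kernel exponent
  set a : ℝ := ((n:ℝ) - 2 * s) * r with ha_def
  have ha0 : 0 ≤ a := by
    have : (0:ℝ) ≤ (n:ℝ) - 2*s := by linarith
    positivity
  have han : a < n := by
    rw [ha_def, hr_def, ← div_eq_mul_inv, div_lt_iff₀ hd0]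
    have hnd : (n:ℝ) * d = (n:ℝ) - 2*s + (n:ℝ)/Q := by
      have h1 : (n:ℝ) * (2*s/(n:ℝ)) = 2*s := by field_simp
      have h2 : (n:ℝ) * d = (n:ℝ) - (n:ℝ) * (2*s/(n:ℝ)) + (n:ℝ) * (1/Q) := by
        rw [hd_def, hip]; ring
      rw [h2, h1, mul_one_div]
    rw [hnd]
    have : 0 < (n:ℝ)/Q := by positivity
    linarith
  haveI : Nonempty (Fin n) := ⟨⟨0, hn⟩⟩
  -- radius
  obtain ⟨R₀, hR₀⟩ := hΩb.subset_closedBall 0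
  set R : ℝ := |R₀| + |R₀| + 1 with hR_def
  have hR0 : 0 < R := by positivity
  have hsub : ∀ x ∈ Ω, ∀ y ∈ Ω, x - y ∈ Metric.closedBall (0:EuclideanSpace ℝ (Fin n)) R := by
    intro x hx y hy
    have h1 : ‖x‖ ≤ R₀ := by simpa [mem_closedBall_zero_iff] using hR₀ hx
    have h2 : ‖y‖ ≤ R₀ := by simpa [mem_closedBall_zero_iff] using hR₀ hy
    rw [mem_closedBall_zero_iff]
    calc ‖x - y‖ ≤ ‖x‖ + ‖y‖ := norm_sub_le _ _
      _ ≤ R := by have := le_abs_self R₀; rw [hR_def]; linarith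
  -- kernel function and uniform bound
  set K : EuclideanSpace ℝ (Fin n) → ℝ≥0∞ := fun z => ENNReal.ofReal (V z) with hK_def
  have hKmeas : Measurable K := ENNReal.measurable_ofReal.comp hVmeas
  set W : EuclideanSpace ℝ (Fin n) → ℝ≥0∞ := fun z => ENNReal.ofReal (c₂ * ‖z‖ ^ (2*s - (n:ℝ))) ^ r with hW_def
  have hWmeas : Measurable W := by
    apply Measurable.pow _ measurable_const
    exact ENNReal.measurable_ofReal.comp ((measurable_norm.pow measurable_const).const_mul c₂)
  set F : EuclideanSpace ℝ (Fin n) → ℝ≥0∞ := (Metric.closedBall (0:EuclideanSpace ℝ (Fin n)) R).indicator W with hF_def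
  have hFmeas : Measurable F := hWmeas.indicator measurableSet_closedBall
  set A : ℝ≥0∞ := ∫⁻ z in Metric.closedBall (0:EuclideanSpace ℝ (Fin n)) R, W z ∂volume with hA_def
  have hA_fin : A < ⊤ := by
    have hWeq : ∀ z : EuclideanSpace ℝ (Fin n), W z = ENNReal.ofReal c₂ ^ r * ENNReal.ofReal (‖z‖ ^ (-a)) := by
      intro z
      rw [hW_def]
      simp only
      rw [ENNReal.ofReal_mul hc₂.le, ENNReal.mul_rpow_of_nonneg _ _ hr0.le]
      congr 1
      rw [ENNReal.ofReal_rpow_of_nonneg (Real.rpow_nonneg (norm_nonneg z) _) hr0.le,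
        ← Real.rpow_mul (norm_nonneg z),
        show (2*s - (n:ℝ))*r = -a from by rw [ha_def]; ring]
    calc A = ∫⁻ z in Metric.closedBall (0:EuclideanSpace ℝ (Fin n)) R,
          ENNReal.ofReal c₂ ^ r * ENNReal.ofReal (‖z‖ ^ (-a)) ∂volume := by
          rw [hA_def]; exact lintegral_congr fun z => hWeq z
      _ = ENNReal.ofReal c₂ ^ r
          * ∫⁻ z in Metric.closedBall (0:EuclideanSpace ℝ (Fin n)) R, ENNReal.ofReal (‖z‖ ^ (-a)) ∂volume := by
          rw [lintegral_const_mul]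
          exact ENNReal.measurable_ofReal.comp (measurable_norm.pow measurable_const)
      _ < ⊤ := ENNReal.mul_lt_top
          (ENNReal.rpow_lt_top_of_nonneg hr0.le ENNReal.ofReal_ne_top)
          (kernel_finite n hn ha0 han hR0)
  have hne : ∀ w : EuclideanSpace ℝ (Fin n), ∀ᵐ (y : EuclideanSpace ℝ (Fin n)) ∂volume, y ≠ w := by
    intro w
    refine (ae_iff).2 ?_
    have : {y : EuclideanSpace ℝ (Fin n) | ¬ y ≠ w} = {w} := by ext y; simp
    rw [this]
    exact measure_singleton w
  have claim1 : ∀ x ∈ Ω, ∫⁻ y, K (x - y) ^ r ∂μ ≤ A := by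
    intro x hx
    have hae : ∀ᵐ y ∂μ, K (x - y) ^ r ≤ F (x - y) := by
      rw [hμ]
      filter_upwards [ae_restrict_of_ae (hne x), ae_restrict_mem hΩm] with y hyx hyΩ
      have hz0 : x - y ≠ 0 := sub_ne_zero.2 (Ne.symm hyx)
      rw [hF_def, Set.indicator_of_mem (hsub x hx y hyΩ)]
      refine ENNReal.rpow_le_rpow ?_ hr0.le
      exact ENNReal.ofReal_le_ofReal (hVbound _ hz0)
    calc ∫⁻ y, K (x - y) ^ r ∂μ ≤ ∫⁻ y, F (x - y) ∂μ := lintegral_mono_ae hae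
      _ ≤ ∫⁻ y, F (x - y) ∂volume := by rw [hμ]; exact setLIntegral_le_lintegral _ _
      _ = ∫⁻ z, F z ∂volume := (Measure.measurePreserving_sub_left volume x).lintegral_comp hFmeas
      _ = A := by rw [hA_def, hF_def, lintegral_indicator measurableSet_closedBall]
  have claim2 : ∀ y ∈ Ω, ∫⁻ x, K (x - y) ^ r ∂μ ≤ A := by
    intro y hy
    have hae : ∀ᵐ x ∂μ, K (x - y) ^ r ≤ F (x - y) := by
      rw [hμ]
      filter_upwards [ae_restrict_of_ae (hne y), ae_restrict_mem hΩm] with x hxy hxΩ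
      have hz0 : x - y ≠ 0 := sub_ne_zero.2 hxy
      rw [hF_def, Set.indicator_of_mem (hsub x hxΩ y hy)]
      refine ENNReal.rpow_le_rpow ?_ hr0.le
      exact ENNReal.ofReal_le_ofReal (hVbound _ hz0)
    calc ∫⁻ x, K (x - y) ^ r ∂μ ≤ ∫⁻ x, F (x - y) ∂μ := lintegral_mono_ae hae
      _ ≤ ∫⁻ x, F (x - y) ∂volume := by rw [hμ]; exact setLIntegral_le_lintegral _ _
      _ = ∫⁻ x, F (x + (-y)) ∂volume := by simp_rw [sub_eq_add_neg]
      _ = ∫⁻ z, F z ∂volume := (measurePreserving_add_right volume (-y)).lintegral_comp hFmeas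
      _ = A := by rw [hA_def, hF_def, lintegral_indicator measurableSet_closedBall]
  -- constant
  have hΩfin : volume Ω < ⊤ := hΩb.measure_lt_top
  set M : ℝ≥0∞ := (volume Ω) ^ (1/q - 1/Q) with hM_def
  have hM_fin : M < ⊤ := by
    refine ENNReal.rpow_lt_top_of_nonneg ?_ hΩfin.ne
    have h1 : 1/Q ≤ 1/q := one_div_le_one_div_of_le (lt_of_lt_of_le one_pos hq) hqQ
    linarith
  set Ctop : ℝ≥0∞ := A ^ d * M with hCtop_def
  have hCtop_fin : Ctop < ⊤ :=
    ENNReal.mul_lt_top (ENNReal.rpow_lt_top_of_nonneg hd0.le hA_fin.ne) hM_fin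
  refine ⟨Ctop.toReal + 1, by positivity, ?_⟩
  intro g hgsupp hgmem
  -- measurable representative
  obtain ⟨g', hg'sm, hgg'⟩ := hgmem.aestronglyMeasurable
  have hg'meas : Measurable g' := hg'sm.measurable
  set G : EuclideanSpace ℝ (Fin n) → ℝ≥0∞ := fun y => (‖g' y‖₊ : ℝ≥0∞) with hG_def
  have hGmeas : Measurable G := hg'meas.nnnorm.coe_nnreal_ennreal
  set u' : EuclideanSpace ℝ (Fin n) → ℝ := fun x => ∫ y, g' y * V (x - y) ∂μ with hu'_def
  have huu' : (fun x => ∫ y in Ω, g y * V (x - y)) = u' := by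
    funext x
    refine integral_congr_ae ?_
    filter_upwards [hgg'] with y hy
    rw [hy]
  have hu'meas : StronglyMeasurable u' := by
    apply MeasureTheory.StronglyMeasurable.integral_prod_right'
      (f := fun z : (EuclideanSpace ℝ (Fin n)) × (EuclideanSpace ℝ (Fin n)) =>
        g' z.2 * V (z.1 - z.2))
    exact ((hg'meas.comp measurable_snd).mul
      (hVmeas.comp (measurable_fst.sub measurable_snd))).stronglyMeasurable
  -- the L^p norm of g
  set Bg : ℝ≥0∞ := ∫⁻ y, G y ^ p ∂μ with hBg_def
  have hpne : (ENNReal.ofReal p) ≠ 0 := by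
    simp [ENNReal.ofReal_eq_zero, not_le, hp0]
  have hsn_eq : eLpNorm g (ENNReal.ofReal p) μ = Bg ^ (1/p) := by
    rw [eLpNorm_congr_ae hgg', eLpNorm_eq_lintegral_rpow_enorm_toReal hpne ENNReal.ofReal_ne_top,
      ENNReal.toReal_ofReal hp0.le]
    rfl
  have hBg_eq : Bg = eLpNorm g (ENNReal.ofReal p) μ ^ p := by
    rw [hsn_eq, ← ENNReal.rpow_mul, one_div_mul_cancel hp0.ne', ENNReal.rpow_one]
  have hBg_fin : Bg < ⊤ := by
    rw [hBg_eq]; exact ENNReal.rpow_lt_top_of_nonneg hp0.le hgmem.2.ne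
  -- pointwise Hölder bound
  set I1 : EuclideanSpace ℝ (Fin n) → ℝ≥0∞ :=
    fun x => ∫⁻ y, K (x - y) ^ r * G y ^ p ∂μ with hI1_def
  have hpoint : ∀ x ∈ Ω, (‖u' x‖₊ : ℝ≥0∞) ≤ I1 x ^ t1 * A ^ t2 * Bg ^ t3 := by
    intro x hx
    have step1 : (‖u' x‖₊ : ℝ≥0∞) ≤ ∫⁻ y, G y * K (x - y) ∂μ := by
      calc (‖u' x‖₊ : ℝ≥0∞) ≤ ∫⁻ y, ‖g' y * V (x - y)‖₊ ∂μ :=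
          enorm_integral_le_lintegral_enorm _
        _ = ∫⁻ y, G y * K (x - y) ∂μ := by
            refine lintegral_congr fun y => ?_
            rw [nnnorm_mul, ENNReal.coe_mul]
            congr 1
            exact Real.enorm_eq_ofReal (hV0 _)
    have hprod : ∀ y, G y * K (x - y)
        = (K (x-y) ^ r * G y ^ p) ^ t1 * (K (x-y) ^ r) ^ t2 * (G y ^ p) ^ t3 := by
      intro y
      have e1 : r * t1 + r * t2 = 1 := by
        have h12 : t1 + t2 = d := by simp only [ht1_def, ht2_def]; ring
        calc r*t1 + r*t2 = r * (t1 + t2) := by ring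
          _ = 1 := by rw [h12, hrd]
      have e2 : p * t1 + p * t3 = 1 := by
        have h13 : t1 + t3 = 1/p := by simp only [ht1_def, ht3_def]; ring
        calc p*t1 + p*t3 = p * (t1 + t3) := by ring
          _ = 1 := by rw [h13]; field_simp
      symm
      calc (K (x-y) ^ r * G y ^ p) ^ t1 * (K (x-y) ^ r) ^ t2 * (G y ^ p) ^ t3
          = (K (x-y) ^ (r*t1) * G y ^ (p*t1)) * K (x-y) ^ (r*t2) * G y ^ (p*t3) := by
            rw [ENNReal.mul_rpow_of_nonneg _ _ ht1_0, ← ENNReal.rpow_mul, ← ENNReal.rpow_mul,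
              ← ENNReal.rpow_mul, ← ENNReal.rpow_mul]
        _ = (K (x-y) ^ (r*t1) * K (x-y) ^ (r*t2)) * (G y ^ (p*t1) * G y ^ (p*t3)) := by
            ring
        _ = K (x-y) ^ (r*t1 + r*t2) * G y ^ (p*t1 + p*t3) := by
            rw [ENNReal.rpow_add_of_nonneg _ _ (mul_nonneg hr0.le ht1_0)
                (mul_nonneg hr0.le ht2_0),
              ENNReal.rpow_add_of_nonneg _ _ (mul_nonneg hp0.le ht1_0)
                (mul_nonneg hp0.le ht3_0)]
        _ = G y * K (x - y) := by
            rw [e1, e2, ENNReal.rpow_one, ENNReal.rpow_one, mul_comm]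
    have hfmeas : ∀ i ∈ (Finset.univ : Finset (Fin 3)),
        AEMeasurable ((![fun y => K (x-y) ^ r * G y ^ p,
          fun y => K (x-y) ^ r, fun y => G y ^ p] : Fin 3 → _ → ℝ≥0∞) i) μ := by
      intro i _
      fin_cases i
      · exact (((hKmeas.comp (measurable_const.sub measurable_id)).pow measurable_const).mul
          (hGmeas.pow measurable_const)).aemeasurable
      · exact ((hKmeas.comp (measurable_const.sub measurable_id)).pow
          measurable_const).aemeasurable
      · exact (hGmeas.pow measurable_const).aemeasurable
    have hHolder := ENNReal.lintegral_prod_norm_pow_le (μ := μ) Finset.univ hfmeas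
        (p := ![t1, t2, t3]) (by simpa [Fin.sum_univ_three] using htsum)
        (by intro i _; fin_cases i <;> simp [ht1_0, ht2_0, ht3_0])
    calc (‖u' x‖₊ : ℝ≥0∞) ≤ ∫⁻ y, G y * K (x - y) ∂μ := step1
      _ = ∫⁻ y, ∏ i, (![fun y => K (x-y) ^ r * G y ^ p,
            fun y => K (x-y) ^ r, fun y => G y ^ p] : Fin 3 → _ → ℝ≥0∞) i y
              ^ (![t1, t2, t3] : Fin 3 → ℝ) i ∂μ := by
          refine lintegral_congr fun y => ?_
          rw [hprod y]
          simp [Fin.prod_univ_three]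
      _ ≤ ∏ i, (∫⁻ y, (![fun y => K (x-y) ^ r * G y ^ p,
            fun y => K (x-y) ^ r, fun y => G y ^ p] : Fin 3 → _ → ℝ≥0∞) i y ∂μ)
              ^ (![t1, t2, t3] : Fin 3 → ℝ) i := hHolder
      _ = I1 x ^ t1 * (∫⁻ y, K (x-y) ^ r ∂μ) ^ t2 * Bg ^ t3 := by
          simp [Fin.prod_univ_three, hI1_def, hBg_def]
      _ ≤ I1 x ^ t1 * A ^ t2 * Bg ^ t3 := by
          gcongr
          exact claim1 x hx
  -- raise to power Q and integrate
  have hQpt : ∀ x ∈ Ω, (‖u' x‖₊ : ℝ≥0∞) ^ Q ≤ I1 x * (A ^ (t2*Q) * Bg ^ (t3*Q)) := by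
    intro x hx
    calc (‖u' x‖₊ : ℝ≥0∞) ^ Q ≤ (I1 x ^ t1 * A ^ t2 * Bg ^ t3) ^ Q :=
        ENNReal.rpow_le_rpow (hpoint x hx) hQ0.le
      _ = I1 x ^ (t1*Q) * A ^ (t2*Q) * Bg ^ (t3*Q) := by
          rw [ENNReal.mul_rpow_of_nonneg _ _ hQ0.le, ENNReal.mul_rpow_of_nonneg _ _ hQ0.le,
            ← ENNReal.rpow_mul, ← ENNReal.rpow_mul, ← ENNReal.rpow_mul]
      _ = I1 x * (A ^ (t2*Q) * Bg ^ (t3*Q)) := by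
          rw [show t1*Q = 1 from by rw [ht1_def]; field_simp, ENNReal.rpow_one, mul_assoc]
  have hconst_ne : A ^ (t2*Q) * Bg ^ (t3*Q) ≠ ⊤ := by
    exact ENNReal.mul_ne_top
      (ENNReal.rpow_ne_top_of_nonneg (mul_nonneg ht2_0 hQ0.le) hA_fin.ne)
      (ENNReal.rpow_ne_top_of_nonneg (mul_nonneg ht3_0 hQ0.le) hBg_fin.ne)
  have hI1int : ∫⁻ x, I1 x ∂μ ≤ A * Bg := by
    have hmeas2 : AEMeasurable
        (fun z : (EuclideanSpace ℝ (Fin n)) × (EuclideanSpace ℝ (Fin n)) =>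
          K (z.1 - z.2) ^ r * G z.2 ^ p) (μ.prod μ) :=
      (((hKmeas.comp (measurable_fst.sub measurable_snd)).pow measurable_const).mul
        ((hGmeas.comp measurable_snd).pow measurable_const)).aemeasurable
    have hswap : ∫⁻ x, I1 x ∂μ = ∫⁻ y, (∫⁻ x, K (x-y) ^ r ∂μ) * G y ^ p ∂μ := by
      rw [hI1_def]
      rw [lintegral_lintegral_swap hmeas2]
      refine lintegral_congr fun y => ?_
      rw [lintegral_mul_const _ (show Measurable fun x : EuclideanSpace ℝ (Fin n) =>
        K (x - y) ^ r from
        ((hKmeas.comp (measurable_id.sub measurable_const)).pow measurable_const))]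
    calc ∫⁻ x, I1 x ∂μ = ∫⁻ y, (∫⁻ x, K (x-y) ^ r ∂μ) * G y ^ p ∂μ := hswap
      _ ≤ ∫⁻ y, A * G y ^ p ∂μ := by
          refine lintegral_mono_ae ?_
          rw [hμ]
          filter_upwards [ae_restrict_mem hΩm] with y hy
          exact mul_le_mul_left (claim2 y hy) _
      _ = A * Bg := by
          rw [hBg_def, lintegral_const_mul _ (hGmeas.pow measurable_const)]
  have hint : ∫⁻ x, (‖u' x‖₊ : ℝ≥0∞) ^ Q ∂μ ≤ A ^ (d*Q) * Bg ^ ((1/p)*Q) := by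
    have hcollect : (A * Bg) * (A ^ (t2*Q) * Bg ^ (t3*Q)) = A ^ (d*Q) * Bg ^ ((1/p)*Q) := by
      have e1 : d*Q = 1 + t2*Q := by
        rw [ht2_def, sub_mul, one_div, inv_mul_cancel₀ hQ0.ne']; ring
      have e2 : (1/p)*Q = 1 + t3*Q := by
        rw [ht3_def, sub_mul, one_div Q, inv_mul_cancel₀ hQ0.ne']; ring
      rw [e1, e2, ENNReal.rpow_add_of_nonneg _ _ zero_le_one (mul_nonneg ht2_0 hQ0.le),
        ENNReal.rpow_add_of_nonneg _ _ zero_le_one (mul_nonneg ht3_0 hQ0.le),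
        ENNReal.rpow_one, ENNReal.rpow_one]
      ring
    calc ∫⁻ x, (‖u' x‖₊ : ℝ≥0∞) ^ Q ∂μ
        ≤ ∫⁻ x, I1 x * (A ^ (t2*Q) * Bg ^ (t3*Q)) ∂μ := by
          refine lintegral_mono_ae ?_
          rw [hμ]
          filter_upwards [ae_restrict_mem hΩm] with x hx
          exact hQpt x hx
      _ = (∫⁻ x, I1 x ∂μ) * (A ^ (t2*Q) * Bg ^ (t3*Q)) :=
          lintegral_mul_const' _ _ hconst_ne
      _ ≤ (A * Bg) * (A ^ (t2*Q) * Bg ^ (t3*Q)) := mul_le_mul_left hI1int _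
      _ = A ^ (d*Q) * Bg ^ ((1/p)*Q) := hcollect
  have hQne : (ENNReal.ofReal Q) ≠ 0 := by
    simp [ENNReal.ofReal_eq_zero, not_le, hQ0]
  have hsnQ : eLpNorm u' (ENNReal.ofReal Q) μ ≤ A ^ d * Bg ^ (1/p) := by
    rw [eLpNorm_eq_lintegral_rpow_enorm_toReal hQne ENNReal.ofReal_ne_top,
      ENNReal.toReal_ofReal hQ0.le]
    calc (∫⁻ x, (‖u' x‖₊ : ℝ≥0∞) ^ Q ∂μ) ^ (1/Q)
        ≤ (A ^ (d*Q) * Bg ^ ((1/p)*Q)) ^ (1/Q) := ENNReal.rpow_le_rpow hint (by positivity)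
      _ = A ^ d * Bg ^ (1/p) := by
          rw [ENNReal.mul_rpow_of_nonneg _ _ (by positivity), ← ENNReal.rpow_mul,
            ← ENNReal.rpow_mul]
          congr 2
          · field_simp
          · field_simp
  have humeas : AEStronglyMeasurable u' μ := hu'meas.aestronglyMeasurable
  have hmono := eLpNorm_le_eLpNorm_mul_rpow_measure_univ (μ := μ)
    (ENNReal.ofReal_le_ofReal hqQ) humeas
  have hμuniv : μ Set.univ = volume Ω := by rw [hμ, Measure.restrict_apply_univ]
  rw [ENNReal.toReal_ofReal (by linarith : (0:ℝ) ≤ q), ENNReal.toReal_ofReal hQ0.le,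
    hμuniv] at hmono
  calc eLpNorm (fun x => ∫ y in Ω, g y * V (x - y)) (ENNReal.ofReal q) μ
      = eLpNorm u' (ENNReal.ofReal q) μ := by rw [huu']
    _ ≤ eLpNorm u' (ENNReal.ofReal Q) μ * M := hmono
    _ ≤ (A ^ d * Bg ^ (1/p)) * M := mul_le_mul_left hsnQ _
    _ = Ctop * (Bg ^ (1/p)) := by rw [hCtop_def]; ring
    _ = Ctop * eLpNorm g (ENNReal.ofReal p) μ := by rw [hsn_eq]
    _ ≤ ENNReal.ofReal (Ctop.toReal + 1) * eLpNorm g (ENNReal.ofReal p) μ := by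
        refine mul_le_mul_left ?_ _
        calc Ctop = ENNReal.ofReal Ctop.toReal := (ENNReal.ofReal_toReal hCtop_fin.ne).symm
          _ ≤ ENNReal.ofReal (Ctop.toReal + 1) := ENNReal.ofReal_le_ofReal (by linarith)
end
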